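/- For each γ with Z_γ ∈ ℂˣ and real φ_γ, the integral (1/4πi)·∫_{l_γ} (dζ/ζ)·Li₂(𝒳_γ(ζ)) over the ray l_γ = {ζ : Z_γ/ζ ∈ ℝ_{<0}}, with 𝒳_γ(ζ) = exp(πZ_γ/ζ + iφ_γ + πζZ̄_γ), equals (1/2πi)·Σ_{n>0} (e^{inφ_γ}/n²)·K₀(2πn|Z_γ|), where Li₂ is the dilogarithm and K₀ the modified Bessel function of the second kind. -/

import Mathlib

/- Proposition of Appendix B (instgenapp): for Z_γ ≠ 0 and φ_γ ∈ ℝ,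
(1/4πi)∫_{l_γ}(dζ/ζ)Li₂(𝒳_γ(ζ)) = (1/2πi)Σ_{n>0}(e^{inφ_γ}/n²)K₀(2πn|Z_γ|),
where 𝒳_γ(ζ) = exp(πZ_γ/ζ + iφ_γ + πζZ̄_γ) and the ray l_γ = {ζ : Z_γ/ζ ∈ ℝ_{<0}}
is parametrized by ζ = −s·Z_γ/|Z_γ|, s > 0 (so that dζ/ζ = ds/s). -/

/-- Modified Bessel function K₀ (integral representation). -/
noncomputable def K0 (x : ℝ) : ℝ :=
  ∫ t in Set.Ioi (0 : ℝ), Real.exp (-x * Real.cosh t)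

/-- Dilogarithm Li₂(w) = Σ_{n>0} wⁿ/n². -/
noncomputable def Li2 (w : ℂ) : ℂ :=
  ∑' n : ℕ, w ^ (n + 1) / ((n : ℂ) + 1) ^ 2

/-- 𝒳_γ(ζ) = exp(πZ_γ/ζ + iφ_γ + πζZ̄_γ). -/
noncomputable def Xgam (Z : ℂ) (φ : ℝ) (ζ : ℂ) : ℂ :=
  Complex.exp ((Real.pi : ℂ) * Z / ζ + Complex.I * (φ : ℂ)
    + (Real.pi : ℂ) * ζ * (starRingEnd ℂ) Z)


open MeasureTheory Set Real

lemma my_abs_le_cosh (x : ℝ) : |x| ≤ Real.cosh x := by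
  rw [← Real.cosh_abs]
  exact le_trans (Real.self_le_sinh_iff.2 (abs_nonneg x)) (Real.sinh_lt_cosh _).le

lemma integrable_cosh_exp {b : ℝ} (hb : 0 < b) :
    Integrable (fun t : ℝ => Real.exp (-b * Real.cosh t)) := by
  have hIoi : IntegrableOn (fun t : ℝ => Real.exp (-b * Real.cosh t)) (Ioi 0) := by
    apply Integrable.mono' (exp_neg_integrableOn_Ioi 0 hb)
    · exact (Real.continuous_exp.comp (continuous_const.mul Real.continuous_cosh)).aestronglyMeasurable
    · filter_upwards [ae_restrict_mem measurableSet_Ioi] with x hx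
      rw [Real.norm_eq_abs, abs_of_nonneg (Real.exp_pos _).le]
      apply Real.exp_le_exp.2
      have : (x : ℝ) ≤ Real.cosh x := le_trans (le_abs_self x) (my_abs_le_cosh x)
      nlinarith
  rw [← integrableOn_univ, ← @Iio_union_Ici _ _ (0 : ℝ), integrableOn_union,
    integrableOn_Ici_iff_integrableOn_Ioi]
  refine ⟨?_, hIoi⟩
  rw [← (Measure.measurePreserving_neg (volume : Measure ℝ)).integrableOn_comp_preimage
      (Homeomorph.neg ℝ).measurableEmbedding]
  simpa [Function.comp_def, Real.cosh_neg] using hIoi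

lemma exp_image_univ : Real.exp '' univ = Ioi (0:ℝ) := by
  rw [Set.image_univ, Real.range_exp]



lemma pt_eq (b t : ℝ) :
    |Real.exp t| • ((Real.exp t)⁻¹ * Real.exp (-b * (Real.exp t + (Real.exp t)⁻¹)))
      = Real.exp (-(2*b) * Real.cosh t) := by
  have h := Real.exp_pos t
  rw [smul_eq_mul, abs_of_pos h, ← mul_assoc, mul_inv_cancel₀ h.ne', one_mul]
  congr 1
  rw [Real.cosh_eq, Real.exp_neg]
  ring

lemma key_subst {b : ℝ} (hb : 0 < b) :
    ∫ s in Ioi (0:ℝ), s⁻¹ * Real.exp (-b * (s + s⁻¹))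
      = ∫ t : ℝ, Real.exp (-(2*b) * Real.cosh t) := by
  rw [← exp_image_univ, integral_image_eq_integral_abs_deriv_smul MeasurableSet.univ
      (fun x _ => (Real.hasDerivAt_exp x).hasDerivWithinAt) (Real.exp_injective.injOn),
      setIntegral_univ]
  exact integral_congr_ae (Filter.Eventually.of_forall fun t => pt_eq b t)

lemma key_int {b : ℝ} (hb : 0 < b) :
    ∫ s in Ioi (0:ℝ), s⁻¹ * Real.exp (-b * (s + s⁻¹)) = 2 * K0 (2*b) := by
  rw [key_subst hb, K0]
  have : ∀ t : ℝ, Real.exp (-(2*b) * Real.cosh t)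
      = (fun x => Real.exp (-(2*b) * Real.cosh x)) |t| := by
    intro t; simp [Real.cosh_abs]
  rw [integral_congr_ae (Filter.Eventually.of_forall this)]; exact integral_comp_abs (f := fun x => Real.exp (-(2*b) * Real.cosh x))

lemma key_integrable {b : ℝ} (hb : 0 < b) :
    IntegrableOn (fun s : ℝ => s⁻¹ * Real.exp (-b * (s + s⁻¹))) (Ioi 0) := by
  rw [← exp_image_univ, integrableOn_image_iff_integrableOn_abs_deriv_smul MeasurableSet.univ
      (fun x _ => (Real.hasDerivAt_exp x).hasDerivWithinAt) (Real.exp_injective.injOn)]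
  apply ((integrable_cosh_exp (show (0:ℝ) < 2*b by linarith)).congr ?_).integrableOn
  filter_upwards with t
  exact (pt_eq b t).symm



lemma X_eq (Z : ℂ) (hZ : Z ≠ 0) (φ : ℝ) {s : ℝ} (hs : 0 < s) :
    Xgam Z φ (-(((s : ℂ) / ((‖Z‖ : ℝ) : ℂ)) * Z))
      = Complex.exp (Complex.I * (φ : ℂ) + ((-(Real.pi * ‖Z‖ * (s + s⁻¹)) : ℝ) : ℂ)) := by
  unfold Xgam
  congr 1
  have hr : (0:ℝ) < ‖Z‖ := norm_pos_iff.mpr hZ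
  have hr' : ((‖Z‖ : ℝ) : ℂ) ≠ 0 := by exact_mod_cast hr.ne'
  have hs' : ((s : ℝ) : ℂ) ≠ 0 := by exact_mod_cast hs.ne'
  have hconj : (starRingEnd ℂ) Z = ((‖Z‖ : ℝ) : ℂ)^2 / Z := by
    rw [eq_div_iff hZ, mul_comm, Complex.mul_conj]
    norm_cast
    rw [← Complex.sq_norm]
  rw [hconj]
  push_cast
  field_simp
  ring

lemma Li2_term (φ x : ℝ) (n : ℕ) :
    (Complex.exp (Complex.I * (φ : ℂ) + ((x : ℝ) : ℂ))) ^ (n + 1) / ((n : ℂ) + 1) ^ 2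
      = Complex.exp (Complex.I * ((n : ℂ) + 1) * (φ : ℂ)) / ((n : ℂ) + 1) ^ 2
        * ((Real.exp (((n : ℝ) + 1) * x) : ℝ) : ℂ) := by
  rw [← Complex.exp_nat_mul]
  rw [show ((n + 1 : ℕ) : ℂ) * (Complex.I * (φ : ℂ) + ((x : ℝ) : ℂ))
      = Complex.I * ((n : ℂ) + 1) * (φ : ℂ) + ((((n : ℝ) + 1) * x : ℝ) : ℂ) by push_cast; ring]
  rw [Complex.exp_add, Complex.ofReal_exp]
  ring

lemma integrand_eq (Z : ℂ) (hZ : Z ≠ 0) (φ : ℝ) {s : ℝ} (hs : 0 < s) :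
    (s : ℂ)⁻¹ * Li2 (Xgam Z φ (-(((s : ℂ) / ((‖Z‖ : ℝ) : ℂ)) * Z)))
      = ∑' n : ℕ, Complex.exp (Complex.I * ((n : ℂ) + 1) * (φ : ℂ)) / ((n : ℂ) + 1) ^ 2
          * (((s⁻¹ * Real.exp (-(((n : ℝ) + 1) * (Real.pi * ‖Z‖)) * (s + s⁻¹))) : ℝ) : ℂ) := by
  rw [X_eq Z hZ φ hs, Li2, ← tsum_mul_left]
  congr 1
  ext n
  rw [Li2_term]
  push_cast
  ring_nf

lemma K0_nonneg (x : ℝ) : 0 ≤ K0 x :=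
  setIntegral_nonneg measurableSet_Ioi fun t _ => (Real.exp_pos _).le

lemma K0_anti {x y : ℝ} (hx : 0 < x) (hxy : x ≤ y) : K0 y ≤ K0 x := by
  apply setIntegral_mono_on ((integrable_cosh_exp (lt_of_lt_of_le hx hxy)).integrableOn)
    ((integrable_cosh_exp hx).integrableOn) measurableSet_Ioi
  intro t _
  apply Real.exp_le_exp.2
  have h1 : (1:ℝ) ≤ Real.cosh t := Real.one_le_cosh t
  nlinarith

lemma normE (φ : ℝ) (n : ℕ) :
    ‖Complex.exp (Complex.I * ((n : ℂ) + 1) * (φ : ℂ)) / ((n : ℂ) + 1) ^ 2‖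
      = 1 / ((n : ℝ) + 1) ^ 2 := by
  rw [norm_div, Complex.norm_exp]
  have : (Complex.I * ((n : ℂ) + 1) * (φ : ℂ)).re = 0 := by
    simp [Complex.mul_re, Complex.mul_im]
  rw [this, Real.exp_zero]
  congr 1
  rw [norm_pow]
  congr 1
  have : ((n : ℂ) + 1) = (((n : ℝ) + 1 : ℝ) : ℂ) := by push_cast; ring
  rw [this, Complex.norm_real, Real.norm_eq_abs, abs_of_pos (by positivity)]

lemma F_integrable (φ c : ℝ) (hc : 0 < c) (n : ℕ) :
    IntegrableOn (fun s : ℝ =>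
        Complex.exp (Complex.I * ((n : ℂ) + 1) * (φ : ℂ)) / ((n : ℂ) + 1) ^ 2
          * (((s⁻¹ * Real.exp (-(((n : ℝ) + 1) * c) * (s + s⁻¹))) : ℝ) : ℂ)) (Ioi 0) := by
  have hb : 0 < ((n : ℝ) + 1) * c := by positivity
  exact (key_integrable hb).ofReal.const_mul _

lemma F_norm_integral (φ c : ℝ) (hc : 0 < c) (n : ℕ) :
    ∫ s in Ioi (0:ℝ), ‖Complex.exp (Complex.I * ((n : ℂ) + 1) * (φ : ℂ)) / ((n : ℂ) + 1) ^ 2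
          * (((s⁻¹ * Real.exp (-(((n : ℝ) + 1) * c) * (s + s⁻¹))) : ℝ) : ℂ)‖
      = (1 / ((n : ℝ) + 1) ^ 2) * (2 * K0 (2 * (((n : ℝ) + 1) * c))) := by
  have hb : 0 < ((n : ℝ) + 1) * c := by positivity
  have h1 : ∀ s ∈ Ioi (0:ℝ),
      ‖Complex.exp (Complex.I * ((n : ℂ) + 1) * (φ : ℂ)) / ((n : ℂ) + 1) ^ 2
          * (((s⁻¹ * Real.exp (-(((n : ℝ) + 1) * c) * (s + s⁻¹))) : ℝ) : ℂ)‖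
        = (1 / ((n : ℝ) + 1) ^ 2) * (s⁻¹ * Real.exp (-(((n : ℝ) + 1) * c) * (s + s⁻¹))) := by
    intro s hs
    rw [norm_mul, normE, Complex.norm_real, Real.norm_eq_abs,
      abs_of_nonneg (mul_nonneg (inv_nonneg.2 (le_of_lt hs)) (Real.exp_pos _).le)]
  rw [setIntegral_congr_fun measurableSet_Ioi h1, MeasureTheory.integral_const_mul, key_int hb]

lemma summable_bound (M : ℝ) : Summable (fun n : ℕ => (1 / ((n : ℝ) + 1) ^ 2) * M) := by
  apply Summable.mul_right
  have h := summable_one_div_nat_pow.mpr (by norm_num : 1 < 2)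
  have h2 := (summable_nat_add_iff 1).mpr h
  apply h2.congr
  intro n
  push_cast
  ring

lemma F_lintegral_ne_top (φ c : ℝ) (hc : 0 < c) :
    ∑' n : ℕ, ∫⁻ s in Ioi (0:ℝ),
        ‖Complex.exp (Complex.I * ((n : ℂ) + 1) * (φ : ℂ)) / ((n : ℂ) + 1) ^ 2
          * (((s⁻¹ * Real.exp (-(((n : ℝ) + 1) * c) * (s + s⁻¹))) : ℝ) : ℂ)‖₊ ≠ ⊤ := by
  have heq : ∀ n : ℕ, ∫⁻ s in Ioi (0:ℝ),
        ‖Complex.exp (Complex.I * ((n : ℂ) + 1) * (φ : ℂ)) / ((n : ℂ) + 1) ^ 2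
          * (((s⁻¹ * Real.exp (-(((n : ℝ) + 1) * c) * (s + s⁻¹))) : ℝ) : ℂ)‖₊
      = ENNReal.ofReal ((1 / ((n : ℝ) + 1) ^ 2) * (2 * K0 (2 * (((n : ℝ) + 1) * c)))) := by
    intro n
    rw [← F_norm_integral φ c hc n]
    exact (ofReal_integral_norm_eq_lintegral_enorm (F_integrable φ c hc n)).symm
  have hle : ∀ n : ℕ, ENNReal.ofReal ((1 / ((n : ℝ) + 1) ^ 2) * (2 * K0 (2 * (((n : ℝ) + 1) * c))))
      ≤ ENNReal.ofReal ((1 / ((n : ℝ) + 1) ^ 2) * (2 * K0 (2 * c))) := by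
    intro n
    apply ENNReal.ofReal_le_ofReal
    apply mul_le_mul_of_nonneg_left _ (by positivity)
    have : (2 : ℝ) * c ≤ 2 * (((n : ℝ) + 1) * c) := by nlinarith [Nat.cast_nonneg (α := ℝ) n]
    linarith [K0_anti (by linarith : (0:ℝ) < 2 * c) this]
  have hsum : ∑' n : ℕ, ∫⁻ s in Ioi (0:ℝ),
        ‖Complex.exp (Complex.I * ((n : ℂ) + 1) * (φ : ℂ)) / ((n : ℂ) + 1) ^ 2
          * (((s⁻¹ * Real.exp (-(((n : ℝ) + 1) * c) * (s + s⁻¹))) : ℝ) : ℂ)‖₊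
      ≤ ENNReal.ofReal (∑' n : ℕ, (1 / ((n : ℝ) + 1) ^ 2) * (2 * K0 (2 * c))) := by
    rw [ENNReal.ofReal_tsum_of_nonneg
      (fun n => mul_nonneg (by positivity) (by linarith [K0_nonneg (2*c)])) (summable_bound _)]
    rw [tsum_congr heq]
    exact ENNReal.tsum_le_tsum hle
  exact ne_top_of_le_ne_top ENNReal.ofReal_ne_top hsum

theorem stmt_15 (Z : ℂ) (hZ : Z ≠ 0) (φ : ℝ) :
    (1 / (4 * (Real.pi : ℂ) * Complex.I)) *
      ∫ s in Set.Ioi (0 : ℝ),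
        (s : ℂ)⁻¹ * Li2 (Xgam Z φ (-(((s : ℂ) / ((‖Z‖ : ℝ) : ℂ)) * Z)))
    = (1 / (2 * (Real.pi : ℂ) * Complex.I)) *
      ∑' n : ℕ, Complex.exp (Complex.I * ((n : ℂ) + 1) * (φ : ℂ)) / ((n : ℂ) + 1) ^ 2 *
        ((K0 (2 * Real.pi * ((n : ℝ) + 1) * ‖Z‖) : ℝ) : ℂ) := by
  have hc : 0 < Real.pi * ‖Z‖ := mul_pos Real.pi_pos (norm_pos_iff.mpr hZ)
  have h1 : ∫ s in Set.Ioi (0 : ℝ),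
        (s : ℂ)⁻¹ * Li2 (Xgam Z φ (-(((s : ℂ) / ((‖Z‖ : ℝ) : ℂ)) * Z)))
      = ∑' n : ℕ, ∫ s in Ioi (0:ℝ),
          Complex.exp (Complex.I * ((n : ℂ) + 1) * (φ : ℂ)) / ((n : ℂ) + 1) ^ 2
            * (((s⁻¹ * Real.exp (-(((n : ℝ) + 1) * (Real.pi * ‖Z‖)) * (s + s⁻¹))) : ℝ) : ℂ) := by
    rw [setIntegral_congr_fun measurableSet_Ioi (fun s hs => integrand_eq Z hZ φ hs)]
    exact integral_tsum (fun n => (F_integrable φ _ hc n).aestronglyMeasurable)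
      (F_lintegral_ne_top φ _ hc)
  have h2 : ∀ n : ℕ, (∫ s in Ioi (0:ℝ),
        Complex.exp (Complex.I * ((n : ℂ) + 1) * (φ : ℂ)) / ((n : ℂ) + 1) ^ 2
          * (((s⁻¹ * Real.exp (-(((n : ℝ) + 1) * (Real.pi * ‖Z‖)) * (s + s⁻¹))) : ℝ) : ℂ))
      = Complex.exp (Complex.I * ((n : ℂ) + 1) * (φ : ℂ)) / ((n : ℂ) + 1) ^ 2
          * (((2 * K0 (2 * Real.pi * ((n : ℝ) + 1) * ‖Z‖)) : ℝ) : ℂ) := by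
    intro n
    have hb : 0 < ((n : ℝ) + 1) * (Real.pi * ‖Z‖) := by positivity
    have hco : (∫ s in Ioi (0:ℝ),
          (((s⁻¹ * Real.exp (-(((n : ℝ) + 1) * (Real.pi * ‖Z‖)) * (s + s⁻¹))) : ℝ) : ℂ))
        = (((∫ s in Ioi (0:ℝ),
            s⁻¹ * Real.exp (-(((n : ℝ) + 1) * (Real.pi * ‖Z‖)) * (s + s⁻¹))) : ℝ) : ℂ) :=
      integral_ofReal
    rw [MeasureTheory.integral_const_mul, hco, key_int hb]
    congr 3
    ring
  rw [h1, tsum_congr h2]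
  have h3 : ∑' n : ℕ, Complex.exp (Complex.I * ((n : ℂ) + 1) * (φ : ℂ)) / ((n : ℂ) + 1) ^ 2
          * (((2 * K0 (2 * Real.pi * ((n : ℝ) + 1) * ‖Z‖)) : ℝ) : ℂ)
      = 2 * ∑' n : ℕ, Complex.exp (Complex.I * ((n : ℂ) + 1) * (φ : ℂ)) / ((n : ℂ) + 1) ^ 2
          * ((K0 (2 * Real.pi * ((n : ℝ) + 1) * ‖Z‖) : ℝ) : ℂ) := by
    rw [← tsum_mul_left]
    apply tsum_congr
    intro n
    push_cast
    ring
  rw [h3, ← mul_assoc]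
  congr 1
  have hπ : (Real.pi : ℂ) ≠ 0 := by exact_mod_cast Real.pi_ne_zero
  field_simp
  ring
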